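/- Let E : ℝ → ℝ, let t₀ ∈ ℝ and τ > 0, and let x : ℝ → ℝ be four-times differentiable on [t₀, t₀+τ] with x''(t) = E(x(t)) for all t ∈ [t₀, t₀+τ] and |x''''(t)| ≤ M on [t₀, t₀+τ]. Then the velocity update of the Störmer–Verlet step satisfies the local truncation error bound |x'(t₀+τ) − (x'(t₀) + (τ/2)·(E(x(t₀)) + E(x(t₀+τ))))| ≤ M·τ³/12. -/

import Mathlib

open Set

/-- Local truncation error of the Störmer–Verlet velocity update: if
`x'' = E ∘ x` on `[t₀, t₀+τ]` and `|x''''| ≤ M` there, then the trapezoidal velocity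
update `x' t₀ + (τ/2)(E (x t₀) + E (x (t₀+τ)))` approximates `x' (t₀+τ)` up to
`M τ³ / 12`. -/
theorem stormer_verlet_velocity_truncation_error
    (E : ℝ → ℝ) (t₀ τ : ℝ) (hτ : 0 < τ)
    (x x' x'' x''' x'''' : ℝ → ℝ) (M : ℝ)
    (hx' : ∀ t ∈ Icc t₀ (t₀ + τ), HasDerivWithinAt x (x' t) (Icc t₀ (t₀ + τ)) t)
    (hx'' : ∀ t ∈ Icc t₀ (t₀ + τ), HasDerivWithinAt x' (x'' t) (Icc t₀ (t₀ + τ)) t)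
    (hx''' : ∀ t ∈ Icc t₀ (t₀ + τ), HasDerivWithinAt x'' (x''' t) (Icc t₀ (t₀ + τ)) t)
    (hx'''' : ∀ t ∈ Icc t₀ (t₀ + τ), HasDerivWithinAt x''' (x'''' t) (Icc t₀ (t₀ + τ)) t)
    (hE : ∀ t ∈ Icc t₀ (t₀ + τ), x'' t = E (x t))
    (hM : ∀ t ∈ Icc t₀ (t₀ + τ), |x'''' t| ≤ M) :
    |x' (t₀ + τ) - (x' t₀ + τ / 2 * (E (x t₀) + E (x (t₀ + τ))))| ≤ M * τ ^ 3 / 12 := by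
  set a := t₀
  set b := t₀ + τ with hb
  have hab : a < b := by show t₀ < t₀ + τ; linarith
  have ha : a ∈ Icc a b := ⟨le_rfl, hab.le⟩
  have hbmem : b ∈ Icc a b := ⟨hab.le, le_rfl⟩
  have hM0 : 0 ≤ M := (abs_nonneg _).trans (hM a ha)
  -- derivatives on the right within Ico
  have toIci : ∀ {f f' : ℝ → ℝ},
      (∀ t ∈ Icc a b, HasDerivWithinAt f (f' t) (Icc a b) t) →
      ∀ t ∈ Ico a b, HasDerivWithinAt f (f' t) (Ici t) t := by
    intro f f' H t ht
    exact (H t (Ico_subset_Icc_self ht)).mono_of_mem_nhdsWithin (Icc_mem_nhdsGE_of_mem ht)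
  -- Step 1: bound h t := x'' t - x'' a - (t - a) * x''' t
  set h : ℝ → ℝ := fun t => x'' t - x'' a - (t - a) * x''' t with hhdef
  have hhderiv : ∀ t ∈ Icc a b,
      HasDerivWithinAt h (-(t - a) * x'''' t) (Icc a b) t := by
    intro t ht
    have h1 : HasDerivWithinAt (fun s => (s - a) * x''' s)
        (1 * x''' t + (t - a) * x'''' t) (Icc a b) t :=
      (((hasDerivWithinAt_id t _).sub_const a)).mul (hx'''' t ht)
    have := ((hx''' t ht).sub_const (x'' a)).sub h1
    exact this.congr_deriv (by ring)
  have hstep1 : ∀ t ∈ Icc a b, |h t| ≤ M * (t - a) ^ 2 / 2 := by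
    have hcont : ContinuousOn h (Icc a b) := fun t ht => (hhderiv t ht).continuousWithinAt
    have hB : ∀ s : ℝ, HasDerivAt (fun t => M * (t - a) ^ 2 / 2) (M * (s - a)) s := by
      intro s
      have : HasDerivAt (fun t : ℝ => M * (t - a) ^ 2 / 2)
          (M * (2 * (s - a) ^ 1 * 1) / 2) s :=
        ((((hasDerivAt_id s).sub_const a).pow 2).const_mul M).div_const 2
      convert this using 1; ring
    have key := image_norm_le_of_norm_deriv_right_le_deriv_boundary hcont
      (toIci hhderiv) (by simp [hhdef]) hB ?_
    · intro t ht
      simpa [Real.norm_eq_abs] using key ht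
    · intro t ht
      have ht' := Ico_subset_Icc_self ht
      have h1 : |(-(t - a) * x'''' t)| = (t - a) * |x'''' t| := by
        rw [abs_mul, abs_neg, abs_of_nonneg (sub_nonneg.2 ht.1)]
      rw [Real.norm_eq_abs, h1, mul_comm]
      exact mul_le_mul_of_nonneg_right (hM t ht') (sub_nonneg.2 ht.1)
      -- exact mul_le_mul_of_nonneg_left (hM t ht') (sub_nonneg.2 ht.1)
  -- Step 2: bound g t := x' t - x' a - (t - a)/2 * (x'' a + x'' t)
  set g : ℝ → ℝ := fun t => x' t - x' a - (t - a) / 2 * (x'' a + x'' t) with hgdef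
  have hgderiv : ∀ t ∈ Icc a b,
      HasDerivWithinAt g (h t / 2) (Icc a b) t := by
    intro t ht
    have h1 : HasDerivWithinAt (fun s => (s - a) / 2 * (x'' a + x'' s))
        ((1 / 2) * (x'' a + x'' t) + (t - a) / 2 * (0 + x''' t)) (Icc a b) t :=
      (((hasDerivWithinAt_id t _).sub_const a).div_const 2).mul
        ((hasDerivWithinAt_const t _ (x'' a)).add (hx''' t ht))
    have := ((hx'' t ht).sub_const (x' a)).sub h1
    exact this.congr_deriv (by simp only [hhdef]; ring)
  have hstep2 : ∀ t ∈ Icc a b, |g t| ≤ M * (t - a) ^ 3 / 12 := by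
    have hcont : ContinuousOn g (Icc a b) := fun t ht => (hgderiv t ht).continuousWithinAt
    have hB : ∀ s : ℝ, HasDerivAt (fun t => M * (t - a) ^ 3 / 12)
        (M * (s - a) ^ 2 / 4) s := by
      intro s
      have : HasDerivAt (fun t : ℝ => M * (t - a) ^ 3 / 12)
          (M * (3 * (s - a) ^ 2 * 1) / 12) s :=
        ((((hasDerivAt_id s).sub_const a).pow 3).const_mul M).div_const 12
      convert this using 1; ring
    have key := image_norm_le_of_norm_deriv_right_le_deriv_boundary hcont
      (toIci hgderiv) (by simp [hgdef]) hB ?_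
    · intro t ht
      simpa [Real.norm_eq_abs] using key ht
    · intro t ht
      have ht' := Ico_subset_Icc_self ht
      rw [Real.norm_eq_abs, abs_div]
      have := hstep1 t ht'
      rw [abs_of_nonneg (by norm_num : (0:ℝ) ≤ 2)]
      calc |h t| / 2 ≤ (M * (t - a) ^ 2 / 2) / 2 := by linarith
        _ = M * (t - a) ^ 2 / 4 := by ring
  have hfin := hstep2 b hbmem
  have e1 : x'' a = E (x a) := hE a ha
  have e2 : x'' b = E (x b) := hE b hbmem
  have : g b = x' (t₀ + τ) - (x' t₀ + τ / 2 * (E (x t₀) + E (x (t₀ + τ)))) := by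
    simp only [hgdef, hb, a, ← e1, ← e2]
    ring_nf
    rw [e2]
  rw [← this]
  convert hfin using 2
  simp [hb, a]
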